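/- arXiv:2604.12853 — 2 statements merged into one kernel-verified Lean document; each statement's English description precedes it below -/
import Mathlib

section
/- In the standing setup, with f: A → C surjective, define α'_X = Σ_{n≥0} 2^{−n−1} α_X P_X^n and α'_Z = Σ_{n≥0} 2^{−n−1} α_Z P_Z^n. Then: (i) α'_X has full support on A and α'_Z has full support on C; (ii) f_*(α'_X) = α'_Z; (iii) MC(α'_X, P_X) =ᵈ (X̄_{t+G})_{t≥0}, where G is a Geometric(1/2) random variable on {0,1,2,…} independent of X̄; and (iv) f(MC(α'_X, P_X)) =ᵈ MC(α'_Z, P_Z). -/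
open MeasureTheory Filter Topology
open scoped ENNReal Classical

/-- A probability vector on a countable state space. -/
def IsProbVec {U : Type*} (v : U → ℝ≥0∞) : Prop := ∑' u, v u = 1

/-- A row-stochastic matrix on a countable state space. -/
def IsStochastic {U : Type*} (P : U → U → ℝ≥0∞) : Prop := ∀ u, ∑' w, P u w = 1

/-- `μ` is the law of the time-homogeneous Markov chain `MC(v,P)`. -/
def IsMarkovChain {U : Type*} [MeasurableSpace U]
    (v : U → ℝ≥0∞) (P : U → U → ℝ≥0∞) (μ : Measure (ℕ → U)) : Prop :=
  IsProbabilityMeasure μ ∧ IsProbVec v ∧ IsStochastic P ∧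
    ∀ (k : ℕ) (a : ℕ → U),
      μ {ω | ∀ i ≤ k, ω i = a i} = v (a 0) * ∏ i ∈ Finset.range k, P (a i) (a (i + 1))

/-- The iterates `v P^n` of a row vector under a transition matrix. -/
noncomputable def vecIter {U : Type*} (v : U → ℝ≥0∞) (P : U → U → ℝ≥0∞) : ℕ → U → ℝ≥0∞
  | 0 => v
  | n + 1 => fun u' => ∑' u, vecIter v P n u * P u u'

/-- The geometric mixture `α' = Σ_{n ≥ 0} 2^{-n-1} α P^n`. -/
noncomputable def geomMix {U : Type*} (v : U → ℝ≥0∞) (P : U → U → ℝ≥0∞) (u : U) : ℝ≥0∞ :=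
  ∑' n : ℕ, (2 : ℝ≥0∞)⁻¹ ^ (n + 1) * vecIter v P n u

namespace S15
variable {U : Type*}

def ext1 (n : ℕ) (p : Fin n → U) (a : U) : ℕ → U :=
  fun i => if h : i < n then p ⟨i, h⟩ else a

def extF (n : ℕ) (p : Fin n → U) (a : ℕ → U) : ℕ → U :=
  fun i => if h : i < n then p ⟨i, h⟩ else a (i - n)

lemma ext1_snoc (n : ℕ) (q : Fin n → U) (b a : U) (i : ℕ) (hi : i ≤ n) :
    ext1 (n+1) (Fin.snoc q b) a i = ext1 n q b i := by
  rcases lt_or_eq_of_le hi with h | h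
  · have h1 : i < n + 1 := by omega
    simp only [ext1, dif_pos h1, dif_pos h]
    have : (⟨i, h1⟩ : Fin (n+1)) = Fin.castSucc ⟨i, h⟩ := rfl
    rw [this, Fin.snoc_castSucc]
  · subst h
    have h1 : i < i + 1 := by omega
    simp only [ext1, dif_pos h1, dif_neg (lt_irrefl i)]
    have : (⟨i, h1⟩ : Fin (i+1)) = Fin.last i := rfl
    rw [this, Fin.snoc_last]

def snocE (n : ℕ) : ((Fin n → U) × U) ≃ (Fin (n+1) → U) where
  toFun := fun pb => Fin.snoc pb.1 pb.2
  invFun := fun p => (Fin.init p, p (Fin.last n))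
  left_inv := fun pb => by simp [Fin.init_snoc, Fin.snoc_last]
  right_inv := fun p => by simp [Fin.snoc_init_self]

lemma pathSum (v : U → ℝ≥0∞) (P : U → U → ℝ≥0∞) :
    ∀ (n : ℕ) (a : U),
    (∑' p : Fin n → U, v (ext1 n p a 0) *
      ∏ i ∈ Finset.range n, P (ext1 n p a i) (ext1 n p a (i+1)))
      = vecIter v P n a := by
  intro n
  induction n with
  | zero =>
    intro a
    rw [tsum_eq_single (fun i => i.elim0) (fun b hb => (hb (funext fun i => i.elim0)).elim)]
    simp [ext1, vecIter]
  | succ n IH =>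
    intro a
    have key : ∀ (q : Fin n → U) (b : U),
        v (ext1 (n+1) (Fin.snoc q b) a 0) *
          ∏ i ∈ Finset.range (n+1), P (ext1 (n+1) (Fin.snoc q b) a i) (ext1 (n+1) (Fin.snoc q b) a (i+1))
        = (v (ext1 n q b 0) * ∏ i ∈ Finset.range n, P (ext1 n q b i) (ext1 n q b (i+1))) * P b a := by
      intro q b
      rw [Finset.prod_range_succ]
      have h0 : ext1 (n+1) (Fin.snoc q b) a 0 = ext1 n q b 0 := ext1_snoc n q b a 0 (Nat.zero_le n)
      have hn : ext1 (n+1) (Fin.snoc q b) a n = b := by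
        rw [ext1_snoc n q b a n le_rfl]; simp [ext1]
      have hn1 : ext1 (n+1) (Fin.snoc q b) a (n+1) = a := by simp [ext1]
      have hprod : ∏ i ∈ Finset.range n, P (ext1 (n+1) (Fin.snoc q b) a i) (ext1 (n+1) (Fin.snoc q b) a (i+1))
          = ∏ i ∈ Finset.range n, P (ext1 n q b i) (ext1 n q b (i+1)) := by
        refine Finset.prod_congr rfl fun i hi => ?_
        have hi' := Finset.mem_range.mp hi
        rw [ext1_snoc n q b a i (by omega), ext1_snoc n q b a (i+1) (by omega)]
      rw [h0, hn, hn1, hprod]; ring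
    calc (∑' p : Fin (n+1) → U, v (ext1 (n+1) p a 0) * ∏ i ∈ Finset.range (n+1), P (ext1 (n+1) p a i) (ext1 (n+1) p a (i+1)))
        = ∑' pb : (Fin n → U) × U,
            (v (ext1 n pb.1 pb.2 0) * ∏ i ∈ Finset.range n, P (ext1 n pb.1 pb.2 i) (ext1 n pb.1 pb.2 (i+1))) * P pb.2 a := by
          rw [← Equiv.tsum_eq (snocE n)]
          exact tsum_congr fun pb => key pb.1 pb.2
      _ = ∑' (q : Fin n → U) (b : U), (v (ext1 n q b 0) * ∏ i ∈ Finset.range n, P (ext1 n q b i) (ext1 n q b (i+1))) * P b a :=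
          ENNReal.tsum_prod (f := fun q b => (v (ext1 n q b 0) * ∏ i ∈ Finset.range n, P (ext1 n q b i) (ext1 n q b (i+1))) * P b a)
      _ = ∑' (b : U) (q : Fin n → U), (v (ext1 n q b 0) * ∏ i ∈ Finset.range n, P (ext1 n q b i) (ext1 n q b (i+1))) * P b a := ENNReal.tsum_comm
      _ = ∑' (b : U), (∑' q : Fin n → U, v (ext1 n q b 0) * ∏ i ∈ Finset.range n, P (ext1 n q b i) (ext1 n q b (i+1))) * P b a :=
          tsum_congr fun b => ENNReal.tsum_mul_right
      _ = ∑' (b : U), vecIter v P n b * P b a := tsum_congr fun b => by rw [IH b]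
      _ = vecIter v P (n+1) a := rfl


lemma mCyl [MeasurableSpace U] [MeasurableSingletonClass U] (k : ℕ) (b : ℕ → U) :
    MeasurableSet {ω : ℕ → U | ∀ i ≤ k, ω i = b i} := by
  have : {ω : ℕ → U | ∀ i ≤ k, ω i = b i}
      = ⋂ (i : ℕ) (_ : i ≤ k), (fun ω : ℕ → U => ω i) ⁻¹' {b i} := by
    ext ω; simp
  rw [this]
  exact MeasurableSet.iInter fun i => MeasurableSet.iInter fun _ =>
    (measurable_pi_apply i) (measurableSet_singleton _)

lemma cyl_shift_eq (n k : ℕ) (a : ℕ → U) :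
    {ω : ℕ → U | ∀ i ≤ k, ω (i + n) = a i}
      = ⋃ p : Fin n → U, {ω | ∀ i ≤ n + k, ω i = extF n p a i} := by
  ext ω
  constructor
  · intro hω
    refine Set.mem_iUnion.2 ⟨fun j => ω j, fun i hi => ?_⟩
    simp only [extF]
    split_ifs with h
    · rfl
    · push_neg at h
      have h2 : i - n ≤ k := by omega
      have := hω (i - n) h2
      rwa [Nat.sub_add_cancel h] at this
  · intro hω
    rcases Set.mem_iUnion.1 hω with ⟨p, hp⟩
    intro i hi
    have h1 := hp (i + n) (by omega)
    rw [h1]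
    simp only [extF]
    rw [dif_neg (by omega)]
    congr 1; omega

lemma cyl_disj (n k : ℕ) (a : ℕ → U) :
    Pairwise (Function.onFun Disjoint
      fun p : Fin n → U => {ω : ℕ → U | ∀ i ≤ n + k, ω i = extF n p a i}) := by
  intro p q hpq
  rw [Function.onFun, Set.disjoint_left]
  intro ω hp hq
  apply hpq
  funext j
  have h1 := hp j.1 (by omega)
  have h2 := hq j.1 (by omega)
  have e1 : extF n p a j.1 = p j := by simp only [extF]; rw [dif_pos j.2]
  have e2 : extF n q a j.1 = q j := by simp only [extF]; rw [dif_pos j.2]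
  rw [e1] at h1; rw [e2] at h2
  rw [← h1, ← h2]

lemma measure_cyl_shift [Countable U] [MeasurableSpace U] [MeasurableSingletonClass U]
    {v : U → ℝ≥0∞} {P : U → U → ℝ≥0∞} {μ : Measure (ℕ → U)}
    (hμ : IsMarkovChain v P μ) (n k : ℕ) (a : ℕ → U) :
    μ {ω | ∀ i ≤ k, ω (i + n) = a i}
      = vecIter v P n (a 0) * ∏ i ∈ Finset.range k, P (a i) (a (i+1)) := by
  rw [cyl_shift_eq, measure_iUnion (cyl_disj n k a) (fun p => mCyl _ _)]
  have hterm : ∀ p : Fin n → U,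
      μ {ω : ℕ → U | ∀ i ≤ n + k, ω i = extF n p a i}
        = (v (ext1 n p (a 0) 0) * ∏ i ∈ Finset.range n, P (ext1 n p (a 0) i) (ext1 n p (a 0) (i+1)))
          * ∏ i ∈ Finset.range k, P (a i) (a (i+1)) := by
    intro p
    rw [hμ.2.2.2 (n + k) (extF n p a)]
    have hee : ∀ i ≤ n, extF n p a i = ext1 n p (a 0) i := by
      intro i hi
      simp only [extF, ext1]
      split_ifs with h
      · rfl
      · congr 1; omega
    rw [Finset.prod_range_add]
    have h1 : ∏ i ∈ Finset.range n, P (extF n p a i) (extF n p a (i+1))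
        = ∏ i ∈ Finset.range n, P (ext1 n p (a 0) i) (ext1 n p (a 0) (i+1)) := by
      refine Finset.prod_congr rfl fun i hi => ?_
      have hi' := Finset.mem_range.mp hi
      rw [hee i (by omega), hee (i+1) (by omega)]
    have h2 : ∏ i ∈ Finset.range k, P (extF n p a (n + i)) (extF n p a (n + i + 1))
        = ∏ i ∈ Finset.range k, P (a i) (a (i+1)) := by
      refine Finset.prod_congr rfl fun i _ => ?_
      have e1 : extF n p a (n + i) = a i := by
        simp only [extF]; rw [dif_neg (by omega)]; congr 1; omega
      have e2 : extF n p a (n + i + 1) = a (i + 1) := by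
        simp only [extF]; rw [dif_neg (by omega)]; congr 1; omega
      rw [e1, e2]
    rw [h1, h2, hee 0 (by omega), mul_assoc]
  calc (∑' p : Fin n → U, μ {ω : ℕ → U | ∀ i ≤ n + k, ω i = extF n p a i})
      = ∑' p : Fin n → U,
          (v (ext1 n p (a 0) 0) * ∏ i ∈ Finset.range n, P (ext1 n p (a 0) i) (ext1 n p (a 0) (i+1)))
          * ∏ i ∈ Finset.range k, P (a i) (a (i+1)) := tsum_congr hterm
    _ = (∑' p : Fin n → U,
          v (ext1 n p (a 0) 0) * ∏ i ∈ Finset.range n, P (ext1 n p (a 0) i) (ext1 n p (a 0) (i+1)))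
          * ∏ i ∈ Finset.range k, P (a i) (a (i+1)) := ENNReal.tsum_mul_right
    _ = vecIter v P n (a 0) * ∏ i ∈ Finset.range k, P (a i) (a (i+1)) := by rw [pathSum]

lemma vecIter_tsum {v : U → ℝ≥0∞} {P : U → U → ℝ≥0∞}
    (hv : IsProbVec v) (hP : IsStochastic P) : ∀ n, ∑' u, vecIter v P n u = 1 := by
  intro n
  induction n with
  | zero => exact hv
  | succ n IH =>
    have : ∑' u', vecIter v P (n+1) u' = ∑' u, vecIter v P n u * ∑' u', P u u' := by
      rw [show (fun u' => vecIter v P (n+1) u') = fun u' => ∑' u, vecIter v P n u * P u u' from rfl]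
      rw [ENNReal.tsum_comm]
      exact tsum_congr fun u => ENNReal.tsum_mul_left
    rw [this]
    simp only [hP _, mul_one]
    exact IH

lemma geom_half : ∑' n : ℕ, (2:ℝ≥0∞)⁻¹ ^ (n+1) = 1 := by
  have : ∀ n : ℕ, (2:ℝ≥0∞)⁻¹ ^ (n+1) = (2:ℝ≥0∞)⁻¹ ^ n * 2⁻¹ := fun n => pow_succ _ _
  rw [tsum_congr this, ENNReal.tsum_mul_right, ENNReal.tsum_geometric, ENNReal.one_sub_inv_two,
    inv_inv]
  exact ENNReal.mul_inv_cancel two_ne_zero ENNReal.ofNat_ne_top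

lemma geomMix_probVec {v : U → ℝ≥0∞} {P : U → U → ℝ≥0∞}
    (hv : IsProbVec v) (hP : IsStochastic P) : IsProbVec (geomMix v P) := by
  unfold IsProbVec geomMix
  rw [ENNReal.tsum_comm]
  calc ∑' (n : ℕ) (u : U), (2:ℝ≥0∞)⁻¹ ^ (n+1) * vecIter v P n u
      = ∑' n : ℕ, (2:ℝ≥0∞)⁻¹ ^ (n+1) * ∑' u, vecIter v P n u :=
        tsum_congr fun n => ENNReal.tsum_mul_left
    _ = ∑' n : ℕ, (2:ℝ≥0∞)⁻¹ ^ (n+1) := by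
        refine tsum_congr fun n => ?_; rw [vecIter_tsum hv hP n, mul_one]
    _ = 1 := geom_half

lemma mShiftCyl [MeasurableSpace U] [MeasurableSingletonClass U] (n k : ℕ) (b : ℕ → U) :
    MeasurableSet {ω : ℕ → U | ∀ i ≤ k, ω (i + n) = b i} := by
  have : {ω : ℕ → U | ∀ i ≤ k, ω (i + n) = b i}
      = ⋂ (i : ℕ) (_ : i ≤ k), (fun ω : ℕ → U => ω (i + n)) ⁻¹' {b i} := by
    ext ω; simp
  rw [this]
  exact MeasurableSet.iInter fun i => MeasurableSet.iInter fun _ =>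
    (measurable_pi_apply (i + n)) (measurableSet_singleton _)

lemma hne_of_vec {V : Type*} (v : V → ℝ≥0∞) (P : V → V → ℝ≥0∞) (u : V) (t : ℕ)
    (hvt : vecIter v P t u ≠ 0) : geomMix v P u ≠ 0 := by
  intro h0
  have h1 : (2:ℝ≥0∞)⁻¹ ^ (t+1) * vecIter v P t u = 0 := by
    refine le_antisymm ?_ zero_le
    rw [← h0]
    exact ENNReal.le_tsum t
  rcases mul_eq_zero.mp h1 with h | h
  · exact pow_ne_zero _ (ENNReal.inv_ne_zero.mpr ENNReal.ofNat_ne_top) h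
  · exact hvt h

lemma geomMix_mul (v : U → ℝ≥0∞) (P : U → U → ℝ≥0∞) (u : U) (q : ℝ≥0∞) :
    ∑' n : ℕ, (2:ℝ≥0∞)⁻¹ ^ (n+1) * (vecIter v P n u * q) = geomMix v P u * q := by
  simp_rw [← mul_assoc]
  rw [ENNReal.tsum_mul_right]
  rfl

lemma cylPi : IsPiSystem {S : Set (ℕ → U) | ∃ (k : ℕ) (b : ℕ → U), S = {ω | ∀ i ≤ k, ω i = b i}} := by
  rintro S ⟨k, a, rfl⟩ T ⟨l, b, rfl⟩ hne
  obtain ⟨ω₀, h1, h2⟩ := hne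
  rcases le_total k l with h | h
  · refine ⟨l, b, ?_⟩
    ext ω
    constructor
    · exact fun hω => hω.2
    · intro hω
      refine ⟨fun i hi => ?_, hω⟩
      calc ω i = b i := hω i (hi.trans h)
        _ = ω₀ i := (h2 i (hi.trans h)).symm
        _ = a i := h1 i hi
  · refine ⟨k, a, ?_⟩
    ext ω
    constructor
    · exact fun hω => hω.1
    · intro hω
      refine ⟨hω, fun i hi => ?_⟩
      calc ω i = a i := hω i (hi.trans h)
        _ = ω₀ i := (h1 i (hi.trans h)).symm
        _ = b i := h2 i hi

lemma eval_singleton_mem_gen [Countable U] (n : ℕ) (a : U) :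
    MeasurableSet[MeasurableSpace.generateFrom
      {S : Set (ℕ → U) | ∃ (k : ℕ) (b : ℕ → U), S = {ω | ∀ i ≤ k, ω i = b i}}] {ω : ℕ → U | ω n = a} := by
  have : {ω : ℕ → U | ω n = a} = {ω : ℕ → U | ∀ i ≤ 0, ω (i + n) = (fun _ => a) i} := by
    ext ω; simp
  rw [this, cyl_shift_eq]
  exact MeasurableSet.iUnion fun p =>
    MeasurableSpace.measurableSet_generateFrom ⟨n + 0, extF n p (fun _ => a), rfl⟩

lemma pi_eq_gen [Countable U] [MeasurableSpace U] [MeasurableSingletonClass U] :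
    (inferInstance : MeasurableSpace (ℕ → U)) =
      MeasurableSpace.generateFrom {S : Set (ℕ → U) | ∃ (k : ℕ) (b : ℕ → U), S = {ω | ∀ i ≤ k, ω i = b i}} := by
  apply le_antisymm
  · refine iSup_le fun n => ?_
    intro s hs
    obtain ⟨t, -, rfl⟩ := hs
    have : (fun ω : ℕ → U => ω n) ⁻¹' t = ⋃ a : t, {ω : ℕ → U | ω n = a.1} := by
      ext ω
      simp only [Set.mem_iUnion, Set.mem_preimage, Set.mem_setOf_eq]
      exact ⟨fun h => ⟨⟨ω n, h⟩, rfl⟩, fun ⟨a, ha⟩ => ha ▸ a.2⟩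
    rw [this]
    exact MeasurableSet.iUnion fun a => eval_singleton_mem_gen n a.1
  · refine MeasurableSpace.generateFrom_le ?_
    rintro s ⟨k, b, rfl⟩
    exact mCyl k b

end S15

/-- **Alternative initial distributions.** With `α'_X = Σ_n 2^{-n-1} α_X P_X^n` and
`α'_Z = Σ_n 2^{-n-1} α_Z P_Z^n`:
(i) `α'_X` has full support on `A` and `α'_Z` has full support on `C`;
(ii) `f_*(α'_X) = α'_Z`;
(iii) `MC(α'_X, P_X)` is equal in law to `(X̄_{t+G})_{t ≥ 0}` where `G` is a Geometric(1/2)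
random variable independent of `X̄`, i.e. its law is the mixture
`Σ_n 2^{-n-1} · (law of (X̄_{t+n})_t)`;
(iv) `f(MC(α'_X, P_X))` is equal in law to `MC(α'_Z, P_Z)`. -/
theorem statement_15
    {A C : Type*} [Countable A] [Countable C]
    [MeasurableSpace A] [MeasurableSingletonClass A]
    [MeasurableSpace C] [MeasurableSingletonClass C]
    (αX : A → ℝ≥0∞) (PX : A → A → ℝ≥0∞) (μX : Measure (ℕ → A))
    (αZ : C → ℝ≥0∞) (PZ : C → C → ℝ≥0∞) (μZ : Measure (ℕ → C))
    (f : A → C) (hfsurj : Function.Surjective f)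
    (hX : IsMarkovChain αX PX μX) (hZ : IsMarkovChain αZ PZ μZ)
    (hfX : μX.map (fun ω n => f (ω n)) = μZ)
    (hAvis : ∀ a : A, ∃ t : ℕ, μX {ω | ω t = a} ≠ 0) :
    (∀ a : A, geomMix αX PX a ≠ 0) ∧
    (∀ c : C, geomMix αZ PZ c ≠ 0) ∧
    (∀ c : C, ∑' a : {x : A // f x = c}, geomMix αX PX a.1 = geomMix αZ PZ c) ∧
    (∀ μ' : Measure (ℕ → A), IsMarkovChain (geomMix αX PX) PX μ' →
      μ' = Measure.sum (fun n : ℕ =>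
        ((2 : ℝ≥0∞)⁻¹ ^ (n + 1)) • μX.map (fun ω t => ω (t + n)))) ∧
    (∀ μ' : Measure (ℕ → A), IsMarkovChain (geomMix αX PX) PX μ' →
      IsMarkovChain (geomMix αZ PZ) PZ (μ'.map (fun ω n => f (ω n)))) := by
  haveI := hX.1
  haveI := hZ.1
  have hF : Measurable (fun ω : ℕ → A => fun n => f (ω n)) :=
    measurable_pi_lambda _ fun n => (measurable_of_countable f).comp (measurable_pi_apply n)
  have hshift : ∀ n : ℕ, Measurable (fun ω : ℕ → A => fun t => ω (t + n)) :=
    fun n => measurable_pi_lambda _ fun t => measurable_pi_apply _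
  have pow_ne : ∀ n : ℕ, ((2:ℝ≥0∞)⁻¹ ^ (n+1)) ≠ 0 :=
    fun n => pow_ne_zero _ (ENNReal.inv_ne_zero.mpr ENNReal.ofNat_ne_top)
  have hdistX : ∀ (t : ℕ) (a : A), μX {ω | ω t = a} = vecIter αX PX t a := by
    intro t a
    have hset : {ω : ℕ → A | ω t = a} = {ω | ∀ i ≤ 0, ω (i + t) = (fun _ => a) i} := by
      ext ω; simp
    rw [hset, S15.measure_cyl_shift hX t 0 (fun _ => a)]
    simp
  have hdistZ : ∀ (t : ℕ) (c : C), μZ {ξ | ξ t = c} = vecIter αZ PZ t c := by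
    intro t c
    have hset : {ξ : ℕ → C | ξ t = c} = {ξ | ∀ i ≤ 0, ξ (i + t) = (fun _ => c) i} := by
      ext ξ; simp
    rw [hset, S15.measure_cyl_shift hZ t 0 (fun _ => c)]
    simp
  have part1 : ∀ a : A, geomMix αX PX a ≠ 0 := by
    intro a
    obtain ⟨t, ht⟩ := hAvis a
    rw [hdistX t a] at ht
    exact S15.hne_of_vec αX PX a t ht
  have msetZ : ∀ (t : ℕ) (c : C), MeasurableSet {ξ : ℕ → C | ξ t = c} := by
    intro t c
    have h : {ξ : ℕ → C | ξ t = c} = (fun ξ : ℕ → C => ξ t) ⁻¹' {c} := rfl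
    rw [h]
    exact (measurable_pi_apply t) (measurableSet_singleton c)
  have part2 : ∀ c : C, geomMix αZ PZ c ≠ 0 := by
    intro c
    obtain ⟨a, ha⟩ := hfsurj c
    obtain ⟨t, ht⟩ := hAvis a
    have hZt : μZ {ξ : ℕ → C | ξ t = c} ≠ 0 := by
      rw [← hfX, Measure.map_apply hF (msetZ t c)]
      intro h0
      apply ht
      refine le_antisymm ?_ zero_le
      rw [← h0]
      refine measure_mono fun ω (hω : ω t = a) => ?_
      show f (ω t) = c
      rw [hω, ha]
    rw [hdistZ t c] at hZt
    exact S15.hne_of_vec αZ PZ c t hZt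
  have part3 : ∀ c : C, ∑' a : {x : A // f x = c}, geomMix αX PX a.1 = geomMix αZ PZ c := by
    intro c
    have hfiber : ∀ n : ℕ, ∑' a : {x : A // f x = c}, vecIter αX PX n a.1 = vecIter αZ PZ n c := by
      intro n
      have h1 : ∀ a : {x : A // f x = c}, vecIter αX PX n a.1 = μX {ω | ω n = a.1} :=
        fun a => (hdistX n a.1).symm
      have hdisj : Pairwise (Function.onFun Disjoint
          fun a : {x : A // f x = c} => {ω : ℕ → A | ω n = a.1}) := by
        intro a b hab
        rw [Function.onFun, Set.disjoint_left]
        intro ω (h1 : ω n = a.1) (h2 : ω n = b.1)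
        exact hab (Subtype.ext (h1 ▸ h2 ▸ rfl))
      have hmeasA : ∀ a : {x : A // f x = c}, MeasurableSet {ω : ℕ → A | ω n = a.1} := by
        intro a
        have h : {ω : ℕ → A | ω n = a.1} = (fun ω : ℕ → A => ω n) ⁻¹' {a.1} := rfl
        rw [h]
        exact (measurable_pi_apply n) (measurableSet_singleton a.1)
      rw [tsum_congr h1, ← measure_iUnion hdisj hmeasA]
      have hU : (⋃ a : {x : A // f x = c}, {ω : ℕ → A | ω n = a.1})
          = (fun ω (m : ℕ) => f (ω m)) ⁻¹' {ξ : ℕ → C | ξ n = c} := by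
        ext ω
        simp only [Set.mem_iUnion, Set.mem_preimage, Set.mem_setOf_eq]
        exact ⟨fun ⟨a, ha⟩ => by rw [show f (ω n) = f a.1 from by rw [ha]]; exact a.2,
          fun h => ⟨⟨ω n, h⟩, rfl⟩⟩
      rw [hU, ← Measure.map_apply hF (msetZ n c), hfX, hdistZ n c]
    calc ∑' a : {x : A // f x = c}, geomMix αX PX a.1
        = ∑' (a : {x : A // f x = c}) (n : ℕ), (2:ℝ≥0∞)⁻¹ ^ (n+1) * vecIter αX PX n a.1 := rfl
      _ = ∑' (n : ℕ) (a : {x : A // f x = c}), (2:ℝ≥0∞)⁻¹ ^ (n+1) * vecIter αX PX n a.1 :=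
          ENNReal.tsum_comm
      _ = ∑' n : ℕ, (2:ℝ≥0∞)⁻¹ ^ (n+1) * ∑' a : {x : A // f x = c}, vecIter αX PX n a.1 :=
          tsum_congr fun n => ENNReal.tsum_mul_left
      _ = ∑' n : ℕ, (2:ℝ≥0∞)⁻¹ ^ (n+1) * vecIter αZ PZ n c :=
          tsum_congr fun n => by rw [hfiber n]
      _ = geomMix αZ PZ c := rfl
  have part4 : ∀ μ' : Measure (ℕ → A), IsMarkovChain (geomMix αX PX) PX μ' →
      μ' = Measure.sum (fun n : ℕ =>
        ((2 : ℝ≥0∞)⁻¹ ^ (n + 1)) • μX.map (fun ω t => ω (t + n))) := by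
    intro μ' hμ'
    haveI := hμ'.1
    set ν : Measure (ℕ → A) := Measure.sum (fun n : ℕ =>
        ((2 : ℝ≥0∞)⁻¹ ^ (n + 1)) • μX.map (fun ω t => ω (t + n))) with hν
    have hsum_apply : ∀ (s : Set (ℕ → A)), MeasurableSet s →
        ν s = ∑' n : ℕ, (2:ℝ≥0∞)⁻¹ ^ (n+1) * μX ((fun ω (t : ℕ) => ω (t + n)) ⁻¹' s) := by
      intro s hs
      rw [hν, Measure.sum_apply _ hs]
      refine tsum_congr fun n => ?_
      rw [Measure.smul_apply, Measure.map_apply (hshift n) hs, smul_eq_mul]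
    haveI : IsFiniteMeasure ν := by
      constructor
      rw [hsum_apply Set.univ MeasurableSet.univ]
      simp only [Set.preimage_univ, measure_univ, mul_one]
      rw [S15.geom_half]
      exact ENNReal.one_lt_top
    refine ext_of_generate_finite _ S15.pi_eq_gen S15.cylPi ?_ ?_
    · rintro s ⟨k, b, rfl⟩
      rw [hμ'.2.2.2 k b, hsum_apply _ (S15.mCyl k b)]
      have hpre : ∀ n : ℕ, (fun (ω : ℕ → A) (t : ℕ) => ω (t + n)) ⁻¹' {ω : ℕ → A | ∀ i ≤ k, ω i = b i}
          = {ω : ℕ → A | ∀ i ≤ k, ω (i + n) = b i} := fun n => rfl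
      calc geomMix αX PX (b 0) * ∏ i ∈ Finset.range k, PX (b i) (b (i+1))
          = ∑' n : ℕ, (2:ℝ≥0∞)⁻¹ ^ (n+1) *
              (vecIter αX PX n (b 0) * ∏ i ∈ Finset.range k, PX (b i) (b (i+1))) :=
            (S15.geomMix_mul αX PX (b 0) _).symm
        _ = ∑' n : ℕ, (2:ℝ≥0∞)⁻¹ ^ (n+1) *
              μX ((fun (ω : ℕ → A) (t : ℕ) => ω (t + n)) ⁻¹' {ω : ℕ → A | ∀ i ≤ k, ω i = b i}) := by
            refine tsum_congr fun n => ?_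
            rw [hpre n, S15.measure_cyl_shift hX n k b]
    · rw [measure_univ, hsum_apply Set.univ MeasurableSet.univ]
      simp only [Set.preimage_univ, measure_univ, mul_one]
      rw [S15.geom_half]
  refine ⟨part1, part2, part3, part4, ?_⟩
  intro μ' hμ'
  haveI := hμ'.1
  refine ⟨Measure.isProbabilityMeasure_map hF.aemeasurable,
    S15.geomMix_probVec hZ.2.1 hZ.2.2.1, hZ.2.2.1, ?_⟩
  intro k c
  rw [Measure.map_apply hF (S15.mCyl k c), part4 μ' hμ',
    Measure.sum_apply _ (hF (S15.mCyl k c))]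
  have hterm : ∀ n : ℕ, (((2:ℝ≥0∞)⁻¹ ^ (n+1)) • μX.map (fun ω (t : ℕ) => ω (t + n)))
      ((fun (ω : ℕ → A) (m : ℕ) => f (ω m)) ⁻¹' {ξ : ℕ → C | ∀ i ≤ k, ξ i = c i})
      = (2:ℝ≥0∞)⁻¹ ^ (n+1) *
          (vecIter αZ PZ n (c 0) * ∏ i ∈ Finset.range k, PZ (c i) (c (i+1))) := by
    intro n
    rw [Measure.smul_apply, Measure.map_apply (hshift n) (hF (S15.mCyl k c)), smul_eq_mul]
    have hset : (fun (ω : ℕ → A) (t : ℕ) => ω (t + n)) ⁻¹'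
          ((fun (ω : ℕ → A) (m : ℕ) => f (ω m)) ⁻¹' {ξ : ℕ → C | ∀ i ≤ k, ξ i = c i})
        = (fun (ω : ℕ → A) (m : ℕ) => f (ω m)) ⁻¹' {ξ : ℕ → C | ∀ i ≤ k, ξ (i + n) = c i} := rfl
    rw [hset, ← Measure.map_apply hF (S15.mShiftCyl n k c), hfX,
      S15.measure_cyl_shift hZ n k c]
  rw [tsum_congr hterm, S15.geomMix_mul αZ PZ (c 0)]
end

section
/- Let 1/2 < p < 1 and q = 1 − p, and let X̄ = MC(δ_0, P_X) be the biased simple random walk on ℤ started at 0, where P_X(x, x+1) = p and P_X(x, x−1) = q for all x ∈ ℤ. Then the absolute-value process (|X̄_t|)_{t≥0} is a time-homogeneous Markov chain on ℕ equal in law to MC(δ_0, P_Z), where P_Z(0,1) = 1 and, for z ≥ 1, P_Z(z, z+1) = (p^{z+1} + q^{z+1})/(p^z + q^z) and P_Z(z, z−1) = (p^z q + q^z p)/(p^z + q^z), all other entries being 0. Moreover X̄ lumps exactly under the absolute value map to MC(δ_0, P_Z) with respect to the family (ν_n)_{n≥0} given by ν_n(k) = (p^n·1{k = n} + q^n·1{k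 = −n})/(p^n + q^n). -/
open MeasureTheory Filter Topology
open scoped ENNReal Classical

/-- The transition matrix of the biased simple random walk on `ℤ`. -/
noncomputable def PXrw (p q : ℝ≥0∞) : ℤ → ℤ → ℝ≥0∞ :=
  fun x y => if y = x + 1 then p else if y = x - 1 then q else 0

/-- The transition matrix of the absolute-value chain on `ℕ`. -/
noncomputable def PZrw (p q : ℝ≥0∞) : ℕ → ℕ → ℝ≥0∞ :=
  fun z w =>
    if z = 0 then (if w = 1 then 1 else 0)
    else if w = z + 1 then (p ^ (z + 1) + q ^ (z + 1)) / (p ^ z + q ^ z)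
    else if w = z - 1 then (p ^ z * q + q ^ z * p) / (p ^ z + q ^ z)
    else 0

/-- The family `ν_n` on `ℤ`: `ν_n(k) = (p^n 1{k = n} + q^n 1{k = -n}) / (p^n + q^n)`. -/
noncomputable def nufam (p q : ℝ≥0∞) (n : ℕ) (k : ℤ) : ℝ≥0∞ :=
  (p ^ n * (if k = (n : ℤ) then 1 else 0) + q ^ n * (if k = -(n : ℤ) then 1 else 0))
    / (p ^ n + q ^ n)

noncomputable def fibF (n : ℕ) : Finset ℤ := {(n : ℤ), -(n : ℤ)}

lemma mem_fibF {n : ℕ} {x : ℤ} : x ∈ fibF n ↔ x.natAbs = n := by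
  simp [fibF, Int.natAbs_eq_iff]

lemma nufam_ne {p q : ℝ≥0∞} {n : ℕ} {k : ℤ} (h : k.natAbs ≠ n) : nufam p q n k = 0 := by
  have h1 : ¬(k = (n:ℤ)) := by omega
  have h2 : ¬(k = -(n:ℤ)) := by omega
  simp [nufam, h1, h2]

lemma nufam_zero {p q : ℝ≥0∞} (k : ℤ) : nufam p q 0 k = if k = 0 then 1 else 0 := by
  by_cases h : k = 0 <;>
    simp [nufam, h, ENNReal.div_self]

lemma nufam_self {p q : ℝ≥0∞} {n : ℕ} (hn : n ≠ 0) :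
    nufam p q n (n : ℤ) = p ^ n / (p ^ n + q ^ n) := by
  have h1 : ¬((n : ℤ) = -(n : ℤ)) := by omega
  simp [nufam, h1]

lemma nufam_neg {p q : ℝ≥0∞} {n : ℕ} (hn : n ≠ 0) :
    nufam p q n (-(n : ℤ)) = q ^ n / (p ^ n + q ^ n) := by
  have h1 : ¬(-(n : ℤ) = (n : ℤ)) := by omega
  simp [nufam, h1]

lemma hmulA (a b c : ℝ≥0∞) : a / b * c = a * c / b := by
  rw [div_eq_mul_inv, div_eq_mul_inv]; ring

lemma hABc (A B c : ℝ≥0∞) (hA0 : A ≠ 0) (hAt : A ≠ ∞) : A / B * (c / A) = c / B := by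
  rw [div_eq_mul_inv, div_eq_mul_inv, div_eq_mul_inv,
    show A * B⁻¹ * (c * A⁻¹) = A * A⁻¹ * (c * B⁻¹) by ring,
    ENNReal.mul_inv_cancel hA0 hAt, one_mul]

lemma hABc2 (A B c d : ℝ≥0∞) (hA0 : A ≠ 0) (hAt : A ≠ ∞) :
    (d * A) / B * (c / A) = d * c / B := by
  rw [div_eq_mul_inv, div_eq_mul_inv, div_eq_mul_inv,
    show d * A * B⁻¹ * (c * A⁻¹) = A * A⁻¹ * (d * c * B⁻¹) by ring,
    ENNReal.mul_inv_cancel hA0 hAt, one_mul]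


lemma hD0 {p q : ℝ≥0∞} (hp0 : p ≠ 0) (m : ℕ) : p ^ m + q ^ m ≠ 0 := by
  simp [pow_eq_zero_iff', hp0]

lemma hDt {p q : ℝ≥0∞} (hpt : p ≠ ∞) (hqt : q ≠ ∞) (m : ℕ) : p ^ m + q ^ m ≠ ∞ :=
  ENNReal.add_ne_top.2 ⟨ENNReal.pow_ne_top hpt, ENNReal.pow_ne_top hqt⟩

lemma lump {p q : ℝ≥0∞} (hp0 : p ≠ 0) (hpt : p ≠ ∞) (hqt : q ≠ ∞) (hpq : p + q = 1)
    (z z' : ℕ) (x' : ℤ) (hx' : x'.natAbs = z') :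
    ∑ x ∈ fibF z, nufam p q z x * PXrw p q x x'
      = PZrw p q z z' * nufam p q z' x' := by
  rcases z with _ | m
  · rw [show fibF 0 = {(0:ℤ)} from by norm_num [fibF], Finset.sum_singleton,
      nufam_zero, if_pos rfl, one_mul]
    by_cases hx1 : x' = 1
    · subst hx1
      have hz' : z' = 1 := by omega
      subst hz'
      rw [show PXrw p q 0 1 = p from by
          simp only [PXrw]; split_ifs <;> first | rfl | contradiction | (exfalso; omega),
        show PZrw p q 0 1 = 1 from by
          simp only [PZrw]; split_ifs <;> first | rfl | contradiction | (exfalso; omega), one_mul,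
        show (1:ℤ) = ((1:ℕ):ℤ) from rfl, nufam_self one_ne_zero]
      rw [pow_one, pow_one, hpq, div_one]
    · by_cases hx2 : x' = -1
      · subst hx2
        have hz' : z' = 1 := by omega
        subst hz'
        rw [show PXrw p q 0 (-1) = q from by
            simp only [PXrw]; split_ifs <;> first | rfl | contradiction | (exfalso; omega),
          show PZrw p q 0 1 = 1 from by
            simp only [PZrw]; split_ifs <;> first | rfl | contradiction | (exfalso; omega), one_mul,
          show (-1:ℤ) = -((1:ℕ):ℤ) from rfl, nufam_neg one_ne_zero]
        rw [pow_one, pow_one, hpq, div_one]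
      · rw [show PXrw p q 0 x' = 0 from by
            simp only [PXrw]; split_ifs <;> first | rfl | contradiction | (exfalso; omega),
          show PZrw p q 0 z' = 0 from by
            simp only [PZrw]; split_ifs <;> first | rfl | contradiction | (exfalso; omega), zero_mul]
  · have hm1 : (m+1 : ℕ) ≠ 0 := by omega
    rw [show fibF (m+1) = {((m+1:ℕ):ℤ), -((m+1:ℕ):ℤ)} from rfl,
      Finset.sum_pair (by omega), nufam_self hm1, nufam_neg hm1]
    by_cases h1 : x' = ((m+1:ℕ):ℤ) + 1
    · have hz' : z' = m+2 := by omega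
      subst hz' h1
      rw [show ((m+1:ℕ):ℤ) + 1 = ((m+2:ℕ):ℤ) from by omega]
      rw [show PXrw p q ((m+1:ℕ):ℤ) ((m+2:ℕ):ℤ) = p from by
          simp only [PXrw]; split_ifs <;> first | rfl | contradiction | (exfalso; omega),
        show PXrw p q (-((m+1:ℕ):ℤ)) ((m+2:ℕ):ℤ) = 0 from by
          simp only [PXrw]; split_ifs <;> first | rfl | contradiction | (exfalso; omega),
        show PZrw p q (m+1) (m+2) = (p^(m+2)+q^(m+2))/(p^(m+1)+q^(m+1)) from by
          simp only [PZrw]; split_ifs <;> first | rfl | contradiction | (exfalso; omega),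
        nufam_self (by omega : (m+2:ℕ) ≠ 0)]
      rw [mul_zero, add_zero, hmulA, ← pow_succ,
        hABc _ _ _ (hD0 hp0 (m+2)) (hDt hpt hqt (m+2))]
    · by_cases h2 : x' = -(((m+1:ℕ):ℤ) + 1)
      · have hz' : z' = m+2 := by omega
        subst hz' h2
        rw [show -(((m+1:ℕ):ℤ) + 1) = -((m+2:ℕ):ℤ) from by omega]
        rw [show PXrw p q ((m+1:ℕ):ℤ) (-((m+2:ℕ):ℤ)) = 0 from by
            simp only [PXrw]; split_ifs <;> first | rfl | contradiction | (exfalso; omega),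
          show PXrw p q (-((m+1:ℕ):ℤ)) (-((m+2:ℕ):ℤ)) = q from by
            simp only [PXrw]; split_ifs <;> first | rfl | contradiction | (exfalso; omega),
          show PZrw p q (m+1) (m+2) = (p^(m+2)+q^(m+2))/(p^(m+1)+q^(m+1)) from by
            simp only [PZrw]; split_ifs <;> first | rfl | contradiction | (exfalso; omega),
          nufam_neg (by omega : (m+2:ℕ) ≠ 0)]
        rw [mul_zero, zero_add, hmulA, ← pow_succ,
          hABc _ _ _ (hD0 hp0 (m+2)) (hDt hpt hqt (m+2))]
      · by_cases h3 : x' = ((m+1:ℕ):ℤ) - 1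
        · subst h3
          have hz' : m = z' := by omega
          subst hz'
          by_cases hm0 : m = 0
          · subst hm0
            rw [show ((0+1:ℕ):ℤ) - 1 = (0:ℤ) from by omega]
            rw [show PXrw p q ((0+1:ℕ):ℤ) 0 = q from by
                simp only [PXrw]; split_ifs <;> first | rfl | contradiction | (exfalso; omega),
              show PXrw p q (-((0+1:ℕ):ℤ)) 0 = p from by
                simp only [PXrw]; split_ifs <;> first | rfl | contradiction | (exfalso; omega),
              show PZrw p q (0+1) 0 = (p^(0+1)*q+q^(0+1)*p)/(p^(0+1)+q^(0+1)) from by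
                simp only [PZrw]; split_ifs <;> first | rfl | contradiction | (exfalso; omega),
              nufam_zero, if_pos rfl, mul_one]
            rw [hmulA, hmulA, ENNReal.div_add_div_same]
          · rw [show ((m+1:ℕ):ℤ) - 1 = ((m:ℕ):ℤ) from by omega]
            rw [show PXrw p q ((m+1:ℕ):ℤ) ((m:ℕ):ℤ) = q from by
                simp only [PXrw]; split_ifs <;> first | rfl | contradiction | (exfalso; omega),
              show PXrw p q (-((m+1:ℕ):ℤ)) ((m:ℕ):ℤ) = 0 from by
                simp only [PXrw]; split_ifs <;> first | rfl | contradiction | (exfalso; omega),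
              show PZrw p q (m+1) m = (p^(m+1)*q+q^(m+1)*p)/(p^(m+1)+q^(m+1)) from by
                simp only [PZrw]; split_ifs <;> first | rfl | contradiction | (exfalso; omega),
              nufam_self hm0]
            rw [mul_zero, add_zero, hmulA,
              show p^(m+1)*q+q^(m+1)*p = (p*q)*(p^m+q^m) from by ring,
              hABc2 _ _ _ _ (hD0 hp0 m) (hDt hpt hqt m),
              show (p*q)*p^m = p^(m+1)*q from by ring]
        · by_cases h4 : x' = -(((m+1:ℕ):ℤ) - 1)
          · have hm0 : m ≠ 0 := by omega
            subst h4
            have hz' : m = z' := by omega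
            subst hz'
            rw [show -(((m+1:ℕ):ℤ) - 1) = -((m:ℕ):ℤ) from by omega]
            rw [show PXrw p q ((m+1:ℕ):ℤ) (-((m:ℕ):ℤ)) = 0 from by
                simp only [PXrw]; split_ifs <;> first | rfl | contradiction | (exfalso; omega),
              show PXrw p q (-((m+1:ℕ):ℤ)) (-((m:ℕ):ℤ)) = p from by
                simp only [PXrw]; split_ifs <;> first | rfl | contradiction | (exfalso; omega),
              show PZrw p q (m+1) m = (p^(m+1)*q+q^(m+1)*p)/(p^(m+1)+q^(m+1)) from by
                simp only [PZrw]; split_ifs <;> first | rfl | contradiction | (exfalso; omega),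
              nufam_neg hm0]
            rw [mul_zero, zero_add, hmulA,
              show p^(m+1)*q+q^(m+1)*p = (p*q)*(p^m+q^m) from by ring,
              hABc2 _ _ _ _ (hD0 hp0 m) (hDt hpt hqt m),
              show (p*q)*q^m = q^(m+1)*p from by ring]
          · rw [show PXrw p q ((m+1:ℕ):ℤ) x' = 0 from by
                simp only [PXrw]; split_ifs <;> first | rfl | contradiction | (exfalso; omega),
              show PXrw p q (-((m+1:ℕ):ℤ)) x' = 0 from by
                simp only [PXrw]; split_ifs <;> first | rfl | contradiction | (exfalso; omega),
              show PZrw p q (m+1) z' = 0 from by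
                simp only [PZrw]; split_ifs <;> first | rfl | contradiction | (exfalso; omega),
              mul_zero, mul_zero, add_zero, zero_mul]

lemma tsum_PX {p q : ℝ≥0∞} (hpq : p + q = 1) (x : ℤ) : ∑' y, PXrw p q x y = 1 := by
  have hoff : ∀ y ∉ ({x+1, x-1} : Finset ℤ), PXrw p q x y = 0 := by
    intro y hy
    simp only [Finset.mem_insert, Finset.mem_singleton, not_or] at hy
    simp only [PXrw]; rw [if_neg hy.1, if_neg hy.2]
  rw [tsum_eq_sum hoff,
    Finset.sum_pair (by omega : x+1 ≠ x-1),
    show PXrw p q x (x+1) = p from by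
      simp only [PXrw]; split_ifs <;> first | rfl | contradiction | (exfalso; omega),
    show PXrw p q x (x-1) = q from by
      simp only [PXrw]; split_ifs <;> first | rfl | contradiction | (exfalso; omega), hpq]

lemma tsum_PZ {p q : ℝ≥0∞} (hp0 : p ≠ 0) (hpt : p ≠ ∞) (hqt : q ≠ ∞) (hpq : p + q = 1)
    (z : ℕ) : ∑' w, PZrw p q z w = 1 := by
  rcases z with _ | m
  · rw [show (fun w => PZrw p q 0 w) = (fun w => if w = 1 then 1 else 0) from by
      funext w; simp [PZrw]]
    exact tsum_ite_eq 1 1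
  · have hoff : ∀ w ∉ ({m+2, m} : Finset ℕ), PZrw p q (m+1) w = 0 := by
      intro w hw
      simp only [Finset.mem_insert, Finset.mem_singleton, not_or] at hw
      simp only [PZrw]; rw [if_neg (by omega), if_neg (by omega), if_neg (by omega)]
    rw [tsum_eq_sum hoff,
      Finset.sum_pair (by omega : m+2 ≠ m),
      show PZrw p q (m+1) (m+2) = (p^(m+2)+q^(m+2))/(p^(m+1)+q^(m+1)) from by
        simp only [PZrw]; split_ifs <;> first | rfl | contradiction | (exfalso; omega),
      show PZrw p q (m+1) m = (p^(m+1)*q+q^(m+1)*p)/(p^(m+1)+q^(m+1)) from by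
        simp only [PZrw]; split_ifs <;> first | rfl | contradiction | (exfalso; omega),
      ENNReal.div_add_div_same,
      show p^(m+2)+q^(m+2)+(p^(m+1)*q+q^(m+1)*p) = (p+q)*(p^(m+1)+q^(m+1)) from by ring,
      hpq, one_mul, ENNReal.div_self (hD0 hp0 (m+1)) (hDt hpt hqt (m+1))]

lemma sum_fib_nufam {p q : ℝ≥0∞} (hp0 : p ≠ 0) (hpt : p ≠ ∞) (hqt : q ≠ ∞) (n : ℕ) :
    ∑ x ∈ fibF n, nufam p q n x = 1 := by
  rcases n with _ | m
  · rw [show fibF 0 = {(0:ℤ)} from by norm_num [fibF], Finset.sum_singleton,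
      nufam_zero, if_pos rfl]
  · rw [show fibF (m+1) = {((m+1:ℕ):ℤ), -((m+1:ℕ):ℤ)} from rfl,
      Finset.sum_pair (by omega), nufam_self (by omega : (m+1:ℕ) ≠ 0),
      nufam_neg (by omega : (m+1:ℕ) ≠ 0), ENNReal.div_add_div_same,
      ENNReal.div_self (hD0 hp0 (m+1)) (hDt hpt hqt (m+1))]

lemma tsum_nufam {p q : ℝ≥0∞} (hp0 : p ≠ 0) (hpt : p ≠ ∞) (hqt : q ≠ ∞) (n : ℕ) :
    ∑' k : ℤ, nufam p q n k = 1 := by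
  rw [tsum_eq_sum (s := fibF n) (fun k hk => nufam_ne (fun h => hk (mem_fibF.2 h)))]
  exact sum_fib_nufam hp0 hpt hqt n

lemma tsum_fiber_lump {p q : ℝ≥0∞} (hp0 : p ≠ 0) (hpt : p ≠ ∞) (hqt : q ≠ ∞) (hpq : p + q = 1)
    (z z' : ℕ) (x' : ℤ) (hx' : x'.natAbs = z') :
    ∑' x : {x : ℤ // x.natAbs = z}, nufam p q z x.1 * PXrw p q x.1 x'
      = PZrw p q z z' * nufam p q z' x' := by
  have h1 : ∑' x : {x : ℤ // x.natAbs = z}, nufam p q z x.1 * PXrw p q x.1 x'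
      = ∑' x : ℤ, Set.indicator {x : ℤ | x.natAbs = z}
          (fun x => nufam p q z x * PXrw p q x x') x :=
    tsum_subtype {x : ℤ | x.natAbs = z} (fun x => nufam p q z x * PXrw p q x x')
  rw [h1]
  rw [tsum_eq_sum (s := fibF z) (by
    intro x hx
    rw [Set.indicator_of_notMem (by simpa [mem_fibF] using hx)])]
  rw [Finset.sum_congr rfl (fun x hx => Set.indicator_of_mem (by simpa [mem_fibF] using hx) _)]
  exact lump hp0 hpt hqt hpq z z' x' hx'


noncomputable def Mrec (v : ℤ → ℝ≥0∞) (P : ℤ → ℤ → ℝ≥0∞) (S : ℕ → Finset ℤ) : ℕ → ℤ → ℝ≥0∞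
  | 0, x => if x ∈ S 0 then v x else 0
  | (k+1), x => if x ∈ S (k+1) then ∑ y ∈ S k, Mrec v P S k y * P y x else 0

lemma measSet1 (k m : ℕ) (S : ℕ → Finset ℤ) (b : ℕ → ℤ) :
    MeasurableSet {ω : ℕ → ℤ | (∀ i ≤ k, ω i ∈ S i) ∧ ∀ j ≤ m, ω (k+j) = b j} := by
  have h1 : {ω : ℕ → ℤ | (∀ i ≤ k, ω i ∈ S i) ∧ ∀ j ≤ m, ω (k+j) = b j}
      = (⋂ i, ⋂ (_ : i ≤ k), (fun ω : ℕ → ℤ => ω i) ⁻¹' (S i : Set ℤ))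
        ∩ (⋂ j, ⋂ (_ : j ≤ m), (fun ω : ℕ → ℤ => ω (k+j)) ⁻¹' {b j}) := by
    ext ω
    simp [Set.mem_iInter, Set.mem_setOf_eq]
  rw [h1]
  exact (MeasurableSet.iInter fun i => MeasurableSet.iInter fun _ =>
      measurable_pi_apply i (S i).measurableSet).inter
    (MeasurableSet.iInter fun j => MeasurableSet.iInter fun _ =>
      measurable_pi_apply (k+j) (measurableSet_singleton _))

lemma meas_cyl {v : ℤ → ℝ≥0∞} {P : ℤ → ℤ → ℝ≥0∞} {μ : Measure (ℕ → ℤ)}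
    (h : IsMarkovChain v P μ) (S : ℕ → Finset ℤ) :
    ∀ k m (b : ℕ → ℤ), μ {ω | (∀ i ≤ k, ω i ∈ S i) ∧ ∀ j ≤ m, ω (k + j) = b j}
      = Mrec v P S k (b 0) * ∏ j ∈ Finset.range m, P (b j) (b (j+1)) := by
  intro k
  induction k with
  | zero =>
    intro m b
    by_cases hb : b 0 ∈ S 0
    · have hset : {ω : ℕ → ℤ | (∀ i ≤ 0, ω i ∈ S i) ∧ ∀ j ≤ m, ω (0 + j) = b j}
          = {ω | ∀ i ≤ m, ω i = b i} := by
        ext ω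
        simp only [Set.mem_setOf_eq]
        constructor
        · rintro ⟨-, h2⟩ i hi
          simpa using h2 i hi
        · intro h2
          refine ⟨fun i hi => ?_, fun j hj => by rw [zero_add]; exact h2 j hj⟩
          have hi0 : i = 0 := by omega
          subst hi0
          rw [h2 0 (by omega)]
          exact hb
      rw [hset, h.2.2.2 m b]
      simp [Mrec, hb]
    · have hset : {ω : ℕ → ℤ | (∀ i ≤ 0, ω i ∈ S i) ∧ ∀ j ≤ m, ω (0 + j) = b j}
          = (∅ : Set (ℕ → ℤ)) := by
        ext ω
        simp only [Set.mem_setOf_eq, Set.mem_empty_iff_false, iff_false, not_and]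
        intro h1 h2
        exact hb (by rw [← h2 0 (by omega)]; exact h1 0 (by omega))
      rw [hset]
      simp [Mrec, hb]
  | succ k ih =>
    intro m b
    by_cases hb : b 0 ∈ S (k+1)
    · set b' : ℤ → ℕ → ℤ := fun y j => if j = 0 then y else b (j-1) with hb'def
      have hset : {ω : ℕ → ℤ | (∀ i ≤ k+1, ω i ∈ S i) ∧ ∀ j ≤ m, ω (k+1+j) = b j}
          = ⋃ y ∈ S k, {ω : ℕ → ℤ | (∀ i ≤ k, ω i ∈ S i) ∧ ∀ j ≤ m+1, ω (k+j) = b' y j} := by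
        ext ω
        simp only [Set.mem_setOf_eq, Set.mem_iUnion, exists_prop]
        constructor
        · rintro ⟨h1, h2⟩
          refine ⟨ω k, h1 k (by omega), fun i hi => h1 i (by omega), fun j hj => ?_⟩
          rcases j with _ | j'
          · simp [hb'def]
          · have e : k + (j'+1) = k+1+j' := by omega
            rw [e, h2 j' (by omega)]
            simp [hb'def]
        · rintro ⟨y, hy, h1, h2⟩
          constructor
          · intro i hi
            rcases Nat.lt_or_ge i (k+1) with hik | hik
            · exact h1 i (by omega)
            · have hik2 : i = k+1 := by omega
              subst hik2
              have e : ω (k+1) = b 0 := by simpa [hb'def] using h2 1 (by omega)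
              rw [e]
              exact hb
          · intro j hj
            have e := h2 (j+1) (by omega)
            rw [show k + (j+1) = k+1+j from by omega] at e
            simpa [hb'def] using e
      have hdisj : Set.PairwiseDisjoint (↑(S k))
          (fun y => {ω : ℕ → ℤ | (∀ i ≤ k, ω i ∈ S i) ∧ ∀ j ≤ m+1, ω (k+j) = b' y j}) := by
        intro y hy y' hy' hne
        rw [Function.onFun, Set.disjoint_left]
        rintro ω ⟨h1, h2⟩ ⟨h1', h2'⟩
        have e : ω (k+0) = y := by simpa [hb'def] using h2 0 (by omega)
        have e' : ω (k+0) = y' := by simpa [hb'def] using h2' 0 (by omega)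
        exact hne (e.symm.trans e')
      rw [hset, measure_biUnion_finset hdisj (fun y _ => measSet1 k (m+1) S (b' y))]
      rw [Finset.sum_congr rfl (fun y hy => ih (m+1) (b' y))]
      have hb0 : ∀ y : ℤ, b' y 0 = y := fun y => by simp [hb'def]
      have hprod : ∀ y : ℤ, ∏ j ∈ Finset.range (m+1), P (b' y j) (b' y (j+1))
          = (∏ j ∈ Finset.range m, P (b j) (b (j+1))) * P y (b 0) := by
        intro y
        rw [Finset.prod_range_succ']
        congr 1
      rw [Finset.sum_congr rfl (fun y hy => by rw [hb0 y, hprod y]),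
        show Mrec v P S (k+1) (b 0) = ∑ y ∈ S k, Mrec v P S k y * P y (b 0) from by
          simp [Mrec, hb],
        Finset.sum_mul]
      exact Finset.sum_congr rfl (fun y hy => by ring)
    · have hset : {ω : ℕ → ℤ | (∀ i ≤ k+1, ω i ∈ S i) ∧ ∀ j ≤ m, ω (k+1+j) = b j}
          = (∅ : Set (ℕ → ℤ)) := by
        ext ω
        simp only [Set.mem_setOf_eq, Set.mem_empty_iff_false, iff_false, not_and]
        intro h1 h2
        exact hb (by rw [← h2 0 (by omega)]; exact h1 (k+1) (by omega))
      rw [hset]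
      simp [Mrec, hb]

lemma Mkey {p q : ℝ≥0∞} (hp0 : p ≠ 0) (hpt : p ≠ ∞) (hqt : q ≠ ∞) (hpq : p + q = 1)
    (a : ℕ → ℕ) : ∀ k (y : ℤ),
    Mrec (fun x : ℤ => if x = 0 then 1 else 0) (PXrw p q) (fun i => fibF (a i)) k y
      = (if a 0 = 0 then 1 else 0) * (∏ i ∈ Finset.range k, PZrw p q (a i) (a (i+1)))
          * nufam p q (a k) y := by
  intro k
  induction k with
  | zero =>
    intro y
    simp only [Mrec, Finset.range_zero, Finset.prod_empty]
    by_cases hy : y ∈ fibF (a 0)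
    · rw [if_pos hy]
      have hyn := mem_fibF.1 hy
      by_cases ha : a 0 = 0
      · have hy0 : y = 0 := by omega
        subst hy0
        rw [ha]
        simp [nufam_zero]
      · have hy0 : ¬(y = 0) := by omega
        rw [if_neg hy0, if_neg ha, zero_mul, zero_mul]
    · rw [if_neg hy, nufam_ne (by simpa [mem_fibF] using hy), mul_zero]
  | succ k ih =>
    intro y
    by_cases hy : y ∈ fibF (a (k+1))
    · simp only [Mrec]
      rw [if_pos hy]
      rw [Finset.sum_congr rfl (fun x (hx : x ∈ fibF (a k)) => by rw [ih x])]
      rw [show ∑ x ∈ fibF (a k),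
            (if a 0 = 0 then (1:ℝ≥0∞) else 0) * (∏ i ∈ Finset.range k, PZrw p q (a i) (a (i+1)))
              * nufam p q (a k) x * PXrw p q x y
          = (if a 0 = 0 then (1:ℝ≥0∞) else 0) * (∏ i ∈ Finset.range k, PZrw p q (a i) (a (i+1)))
              * ∑ x ∈ fibF (a k), nufam p q (a k) x * PXrw p q x y from by
        rw [Finset.mul_sum]; exact Finset.sum_congr rfl fun x hx => by ring]
      rw [lump hp0 hpt hqt hpq (a k) (a (k+1)) y (mem_fibF.1 hy), Finset.prod_range_succ]
      ring
    · simp only [Mrec]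
      rw [if_neg hy, nufam_ne (by simpa [mem_fibF] using hy), mul_zero]

/-- **Biased random walk and its absolute value.** For `1/2 < p < 1`, `q = 1 - p`, and
`X̄ = MC(δ_0, P_X)` the biased simple random walk on `ℤ`, the absolute-value process
`(|X̄_t|)_{t ≥ 0}` is a time-homogeneous Markov chain equal in law to `MC(δ_0, P_Z)`;
moreover `X̄` lumps exactly under `|·|` to `MC(δ_0, P_Z)` with respect to `(ν_n)_{n ≥ 0}`:
each `ν_n` is a probability vector supported on the fibre `{k : |k| = n}`, the exact lumping
equation holds, and `δ_0` is a convex combination of the `ν_n`. -/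
theorem statement_19
    (p q : ℝ≥0∞) (hp : 1/2 < p) (hp1 : p < 1) (hq : q = 1 - p)
    (μX : Measure (ℕ → ℤ))
    (hX : IsMarkovChain (fun x : ℤ => if x = 0 then 1 else 0) (PXrw p q) μX) :
    IsMarkovChain (fun z : ℕ => if z = 0 then 1 else 0) (PZrw p q)
      (μX.map (fun ω n => (ω n).natAbs)) ∧
    (∀ (n : ℕ) (k : ℤ), k.natAbs ≠ n → nufam p q n k = 0) ∧
    (∀ n : ℕ, ∑' k : ℤ, nufam p q n k = 1) ∧
    (∀ (z z' : ℕ) (x' : ℤ), x'.natAbs = z' →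
      ∑' x : {x : ℤ // x.natAbs = z}, nufam p q z x.1 * PXrw p q x.1 x'
        = PZrw p q z z' * nufam p q z' x') ∧
    (∃ w : ℕ → ℝ≥0∞, ∑' n, w n = 1 ∧
      ∀ k : ℤ, (if k = 0 then (1 : ℝ≥0∞) else 0) = ∑' n, w n * nufam p q n k) := by
  have hp0 : p ≠ 0 := by
    have h2 : (0:ℝ≥0∞) < 1/2 := ENNReal.div_pos one_ne_zero ENNReal.ofNat_ne_top
    exact (h2.trans hp).ne'
  have hpt : p ≠ ∞ := ne_top_of_lt hp1
  have hqt : q ≠ ∞ := by rw [hq]; exact ENNReal.sub_ne_top ENNReal.one_ne_top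
  have hpq : p + q = 1 := by rw [hq]; exact add_tsub_cancel_of_le hp1.le
  have hF : Measurable (fun (ω : ℕ → ℤ) (n : ℕ) => (ω n).natAbs) :=
    measurable_pi_lambda _ fun n =>
      (measurable_from_top (f := Int.natAbs)).comp (measurable_pi_apply n)
  refine ⟨⟨?_, ?_, ?_, ?_⟩, ?_, ?_, ?_, ?_⟩
  · haveI := hX.1
    exact Measure.isProbabilityMeasure_map hF.aemeasurable
  · show ∑' z : ℕ, (if z = 0 then (1:ℝ≥0∞) else 0) = 1
    exact tsum_ite_eq 0 1
  · exact fun z => tsum_PZ hp0 hpt hqt hpq z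
  · intro k a
    have hmeas : MeasurableSet {ω : ℕ → ℕ | ∀ i ≤ k, ω i = a i} := by
      have h1 : {ω : ℕ → ℕ | ∀ i ≤ k, ω i = a i}
          = ⋂ i, ⋂ (_ : i ≤ k), (fun ω : ℕ → ℕ => ω i) ⁻¹' {a i} := by
        ext ω; simp [Set.mem_iInter]
      rw [h1]
      exact MeasurableSet.iInter fun i => MeasurableSet.iInter fun _ =>
        measurable_pi_apply i (measurableSet_singleton _)
    rw [Measure.map_apply hF hmeas]
    have hpre : (fun (ω : ℕ → ℤ) (n : ℕ) => (ω n).natAbs) ⁻¹' {ω : ℕ → ℕ | ∀ i ≤ k, ω i = a i}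
        = ⋃ y ∈ fibF (a k), {ω : ℕ → ℤ |
            (∀ i ≤ k, ω i ∈ fibF (a i)) ∧ ∀ j ≤ 0, ω (k+j) = (fun _ => y) j} := by
      ext ω
      simp only [Set.mem_preimage, Set.mem_setOf_eq, Set.mem_iUnion, exists_prop]
      constructor
      · intro h
        refine ⟨ω k, mem_fibF.2 (h k le_rfl), fun i hi => mem_fibF.2 (h i hi), fun j hj => ?_⟩
        have hj0 : j = 0 := by omega
        subst hj0
        rfl
      · rintro ⟨y, hy, h1, h2⟩ i hi
        exact mem_fibF.1 (h1 i hi)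
    rw [hpre]
    have hdisj : Set.PairwiseDisjoint (↑(fibF (a k))) (fun y : ℤ => {ω : ℕ → ℤ |
        (∀ i ≤ k, ω i ∈ fibF (a i)) ∧ ∀ j ≤ 0, ω (k+j) = (fun _ => y) j}) := by
      intro y hy y' hy' hne
      rw [Function.onFun, Set.disjoint_left]
      rintro ω ⟨-, h2⟩ ⟨-, h2'⟩
      exact hne ((h2 0 (by omega)).symm.trans (h2' 0 (by omega)))
    rw [measure_biUnion_finset hdisj (fun y _ => measSet1 k 0 _ _)]
    rw [Finset.sum_congr rfl (fun y hy => meas_cyl hX (fun i => fibF (a i)) k 0 (fun _ => y))]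
    simp only [Finset.range_zero, Finset.prod_empty, mul_one]
    rw [Finset.sum_congr rfl (fun y hy => Mkey hp0 hpt hqt hpq a k y)]
    rw [← Finset.mul_sum, sum_fib_nufam hp0 hpt hqt (a k), mul_one]
  · exact fun n k h => nufam_ne h
  · exact fun n => tsum_nufam hp0 hpt hqt n
  · exact fun z z' x' h => tsum_fiber_lump hp0 hpt hqt hpq z z' x' h
  · refine ⟨fun n => if n = 0 then 1 else 0, tsum_ite_eq 0 1, fun k => ?_⟩
    have h1 : ∑' n : ℕ, (if n = 0 then (1:ℝ≥0∞) else 0) * nufam p q n k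
        = ∑' n : ℕ, (if n = 0 then nufam p q 0 k else 0) :=
      tsum_congr fun n => by split_ifs with h <;> simp [h]
    rw [h1, tsum_ite_eq 0 (fun _ => nufam p q 0 k), nufam_zero]
end
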